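/- If p - p' < √(p') for every prime p ≥ 131 (p' the previous prime), then for every integer n ≥ 131 the interval (n - √n, n) contains a prime. -/
import Mathlib


def PrevPrime (p p' : ℕ) : Prop :=
  p'.Prime ∧ p' < p ∧ ∀ r : ℕ, r.Prime → r < p → r ≤ p'

theorem stmt12
    (h : ∀ p p' : ℕ, p.Prime → 131 ≤ p → PrevPrime p p' → (p : ℝ) - p' < Real.sqrt p') :
    ∀ n : ℕ, 131 ≤ n → ∃ r : ℕ, r.Prime ∧ (n : ℝ) - Real.sqrt n < r ∧ r < n := by
  intro n hn
  have hex : ∃ p, n ≤ p ∧ p.Prime := by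
    obtain ⟨p, h1, h2⟩ := Nat.exists_infinite_primes n
    exact ⟨p, h1, h2⟩
  set p := Nat.find hex with hp_def
  obtain ⟨hnp, hpp⟩ := Nat.find_spec hex
  have hp131 : 131 ≤ p := le_trans hn hnp
  set p' := Nat.findGreatest Nat.Prime (p - 1) with hp'_def
  have h2le : 2 ≤ p - 1 := by omega
  have hp'prime : p'.Prime := Nat.findGreatest_spec h2le Nat.prime_two
  have hp'lt : p' < p := by
    have := Nat.findGreatest_le (P := Nat.Prime) (p - 1)
    omega
  have hmax : ∀ r : ℕ, r.Prime → r < p → r ≤ p' := fun r hr hrp =>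
    Nat.le_findGreatest (by omega) hr
  have hprev : PrevPrime p p' := ⟨hp'prime, hp'lt, hmax⟩
  have hgap := h p p' hpp hp131 hprev
  -- p' < n : otherwise p' would satisfy the find predicate, contradicting minimality
  have hp'n : p' < n := by
    by_contra hc
    exact Nat.find_min hex hp'lt ⟨by omega, hp'prime⟩
  refine ⟨p', hp'prime, ?_, hp'n⟩
  have hsq : Real.sqrt p' ≤ Real.sqrt n :=
    Real.sqrt_le_sqrt (by exact_mod_cast hp'n.le)
  have hpn : (n : ℝ) ≤ p := by exact_mod_cast hnp
  linarith
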